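/- (Optimal mixture strictly reduces variance.) If Var[D] > 0, Cov(U, D) ≠ 0, and Cov(U, D) ≠ −Var[D], then with ω⋆ := −Cov(U, D)/Var[D] one has Var[g_{ω⋆}] < min( Var[g_0], Var[g_1] ); that is, the gradient at the optimal mixture coefficient has strictly smaller variance than both the pure lower-bound gradient (ω = 0) and the pure upper-bound gradient (ω = 1). -/

import Mathlib

open MeasureTheory ProbabilityTheory

/-- Covariance of two real random variables with respect to a measure `μ`:
`Cov(X, Y) = E[(X − E[X])·(Y − E[Y])]`. -/
noncomputable def cov {Ω : Type*} {mΩ : MeasurableSpace Ω} (μ : Measure Ω)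
    (X Y : Ω → ℝ) : ℝ :=
  ∫ ω, (X ω - ∫ a, X a ∂μ) * (Y ω - ∫ a, Y a ∂μ) ∂μ

lemma memL2_integrable_mul {Ω : Type*} {mΩ : MeasurableSpace Ω} {μ : Measure Ω}
    {f g : Ω → ℝ} (hf : MemLp f 2 μ) (hg : MemLp g 2 μ) :
    Integrable (fun x => f x * g x) μ := by
  have h1 := (hf.add hg).integrable_sq
  have h2 := hf.integrable_sq
  have h3 := hg.integrable_sq
  have heq : (fun x => f x * g x)
      = fun x => (((f x + g x) ^ 2 - f x ^ 2) - g x ^ 2) / 2 := by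
    funext x; ring
  rw [heq]
  exact (((h1.sub h2).sub h3)).div_const 2

lemma cov_eq {Ω : Type*} {mΩ : MeasurableSpace Ω} (μ : Measure Ω) [IsProbabilityMeasure μ]
    {f g : Ω → ℝ} (hf : MemLp f 2 μ) (hg : MemLp g 2 μ) :
    cov μ f g = (∫ a, f a * g a ∂μ) - (∫ a, f a ∂μ) * (∫ a, g a ∂μ) := by
  have hfi : Integrable f μ := hf.integrable one_le_two
  have hgi : Integrable g μ := hg.integrable one_le_two
  have hfg := memL2_integrable_mul hf hg
  set a := ∫ x, f x ∂μ
  set b := ∫ x, g x ∂μ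
  have heq : (fun ω => (f ω - a) * (g ω - b))
      = fun ω => ((f ω * g ω - b * f ω) - a * g ω) + a * b := by
    funext ω; ring
  have i1 : Integrable (fun ω => b * f ω) μ := hfi.const_mul b
  have i2 : Integrable (fun ω => a * g ω) μ := hgi.const_mul a
  have i3 : Integrable (fun ω => f ω * g ω - b * f ω) μ := hfg.sub i1
  have i4 : Integrable (fun ω => f ω * g ω - b * f ω - a * g ω) μ := i3.sub i2
  rw [cov, heq, integral_add i4 (integrable_const _), integral_sub i3 i2,
    integral_sub hfg i1, integral_const_mul, integral_const_mul, integral_const]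
  simp
  ring

lemma var_mix {Ω : Type*} {mΩ : MeasurableSpace Ω} (μ : Measure Ω) [IsProbabilityMeasure μ]
    {f g : Ω → ℝ} (hf : MemLp f 2 μ) (hg : MemLp g 2 μ) (c : ℝ) :
    variance (fun a => f a + c * g a) μ
      = variance f μ + 2 * c * cov μ f g + c ^ 2 * variance g μ := by
  have hcg : MemLp (fun a => c * g a) 2 μ := hg.const_mul c
  have hsum : MemLp (fun a => f a + c * g a) 2 μ := hf.add hcg
  have hfi : Integrable f μ := hf.integrable one_le_two
  have hgi : Integrable g μ := hg.integrable one_le_two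
  have hf2 := hf.integrable_sq
  have hg2 := hg.integrable_sq
  have hfg := memL2_integrable_mul hf hg
  have hsq : (fun a => (f a + c * g a) ^ 2)
      = fun a => (f a ^ 2 + (2 * c) * (f a * g a)) + c ^ 2 * g a ^ 2 := by
    funext a; ring
  have hint2 : (∫ a, (f a + c * g a) ^ 2 ∂μ)
      = (∫ a, f a ^ 2 ∂μ) + 2 * c * (∫ a, f a * g a ∂μ) + c ^ 2 * (∫ a, g a ^ 2 ∂μ) := by
    have j1 : Integrable (fun a => 2 * c * (f a * g a)) μ := hfg.const_mul _
    have j2 : Integrable (fun a => c ^ 2 * g a ^ 2) μ := hg2.const_mul _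
    have j3 : Integrable (fun a => f a ^ 2 + 2 * c * (f a * g a)) μ := hf2.add j1
    rw [hsq, integral_add j3 j2, integral_add hf2 j1, integral_const_mul, integral_const_mul]
  have hmean : (∫ a, f a + c * g a ∂μ) = (∫ a, f a ∂μ) + c * ∫ a, g a ∂μ := by
    have j0 : Integrable (fun a => c * g a) μ := hgi.const_mul c
    rw [integral_add hfi j0, integral_const_mul]
  rw [variance_eq_sub hsum, variance_eq_sub hf, variance_eq_sub hg, cov_eq μ hf hg]
  simp only [Pi.pow_apply]
  rw [hint2, hmean]
  ring

/-- **Optimal mixture strictly reduces variance.**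
With `U := W·S`, `V := ρ·S` square-integrable, `D := V − U` and `g_ω := U + ω·D`, if
`Var[D] > 0`, `Cov(U, D) ≠ 0` and `Cov(U, D) ≠ −Var[D]`, then the gradient at the
optimal mixture coefficient `ω⋆ := −Cov(U, D)/Var[D]` has strictly smaller variance
than both the pure lower-bound gradient (`ω = 0`) and the pure upper-bound gradient
(`ω = 1`). -/
theorem variance_mixture_gradient_strict_reduction
    {Ω : Type*} {mΩ : MeasurableSpace Ω} (μ : Measure Ω) [IsProbabilityMeasure μ]
    (W ρ S : Ω → ℝ)
    (hU : MemLp (fun a => W a * S a) 2 μ)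
    (hV : MemLp (fun a => ρ a * S a) 2 μ)
    (U D : Ω → ℝ) (hUdef : U = fun a => W a * S a)
    (hDdef : D = fun a => ρ a * S a - W a * S a)
    (hD : 0 < variance D μ)
    (hcov : cov μ U D ≠ 0) (hcov' : cov μ U D ≠ -variance D μ) :
    ∀ ωstar : ℝ, ωstar = -cov μ U D / variance D μ →
      variance (fun a => U a + ωstar * D a) μ <
        min (variance (fun a => U a + 0 * D a) μ)
          (variance (fun a => U a + 1 * D a) μ) := by
  intro t ht
  have hU2 : MemLp U 2 μ := hUdef ▸ hU
  have hD2 : MemLp D 2 μ := by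
    rw [hDdef]; exact hV.sub hU
  set C := cov μ U D with hC
  set VD := variance D μ with hVD
  have hym : ∀ c : ℝ, variance (fun a => U a + c * D a) μ
      = variance U μ + 2 * c * C + c ^ 2 * VD := fun c => var_mix μ hU2 hD2 c
  rw [hym t, hym 0, hym 1]
  have htVD : t * VD = -C := ht ▸ div_mul_cancel₀ (-C) (ne_of_gt hD)
  have hC2 : 0 < C ^ 2 := lt_of_le_of_ne (sq_nonneg C) (Ne.symm (pow_ne_zero 2 hcov))
  have hCD : 0 < (C + VD) ^ 2 := by
    have : C + VD ≠ 0 := fun h => hcov' (by linarith)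
    exact lt_of_le_of_ne (sq_nonneg _) (Ne.symm (pow_ne_zero 2 this))
  rw [lt_min_iff]
  constructor
  · nlinarith [sq_nonneg (t * VD + C), mul_pos hD hC2]
  · nlinarith [mul_pos hD hCD]
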